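/- Let k ≥ 2 and 1 ≤ r < k-1 be integers with r not dividing k-1, and suppose diam(K(2k+r,k)) = 2p+1 for some p ≥ 1. Then two k-subsets A, B of [2k+r] are at distance exactly 2p+1 in K(2k+r,k) if and only if rp - r + 1 ≤ |A ∩ B| ≤ k - rp - 1. -/

import Mathlib

/-- The Kneser graph: vertices are the `k`-subsets of `[n]`, adjacency is disjointness. -/
def kneserGraph (n k : ℕ) : SimpleGraph {A : Finset (Fin n) // A.card = k} where
  Adj A B := A ≠ B ∧ Disjoint A.1 B.1
  symm := ⟨fun A B h => ⟨h.1.symm, h.2.symm⟩⟩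
  loopless := ⟨fun A h => h.1 rfl⟩

/-- The exact distance-`d` graph of a graph `G`. -/
def exactDistanceGraph {V : Type*} (G : SimpleGraph V) (d : ℕ) : SimpleGraph V where
  Adj A B := A ≠ B ∧ G.dist A B = d
  symm := ⟨fun A B h => ⟨h.1.symm, by rw [SimpleGraph.dist_comm]; exact h.2⟩⟩
  loopless := ⟨fun A h => h.1 rfl⟩

section aux
variable {k r : ℕ}

abbrev KV (k r : ℕ) := {A : Finset (Fin (2*k+r)) // A.card = k}

lemma pair_le {X Y B : Finset (Fin (2*k+r))} (hB : B.card = k) (hXY : Disjoint X Y) :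
    (X ∩ B).card + (Y ∩ B).card ≤ k := by
  have hd : Disjoint (X ∩ B) (Y ∩ B) := hXY.mono inf_le_left inf_le_left
  rw [← Finset.card_union_of_disjoint hd]
  calc (X ∩ B ∪ Y ∩ B).card ≤ B.card :=
        Finset.card_le_card (Finset.union_subset inf_le_right inf_le_right)
    _ = k := hB

lemma pair_ge {X Y B : Finset (Fin (2*k+r))} (hX : X.card = k) (hY : Y.card = k)
    (hB : B.card = k) (hXY : Disjoint X Y) :
    k ≤ (X ∩ B).card + (Y ∩ B).card + r := by
  have hsub : B ⊆ (X ∩ B) ∪ (Y ∩ B) ∪ (X ∪ Y)ᶜ := by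
    intro a ha
    by_cases hx : a ∈ X
    · exact Finset.mem_union_left _ (Finset.mem_union_left _ (Finset.mem_inter.2 ⟨hx, ha⟩))
    by_cases hy : a ∈ Y
    · exact Finset.mem_union_left _ (Finset.mem_union_right _ (Finset.mem_inter.2 ⟨hy, ha⟩))
    · exact Finset.mem_union_right _ (by simp [hx, hy])
  have hc : ((X ∪ Y)ᶜ : Finset (Fin (2*k+r))).card = r := by
    rw [Finset.card_compl, Finset.card_union_of_disjoint hXY, hX, hY, Fintype.card_fin]
    omega
  calc k = B.card := hB.symm
    _ ≤ ((X ∩ B) ∪ (Y ∩ B) ∪ (X ∪ Y)ᶜ).card := Finset.card_le_card hsub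
    _ ≤ ((X ∩ B) ∪ (Y ∩ B)).card + ((X ∪ Y)ᶜ).card := Finset.card_union_le _ _
    _ ≤ (X ∩ B).card + (Y ∩ B).card + ((X ∪ Y)ᶜ).card :=
        Nat.add_le_add_right (Finset.card_union_le _ _) _
    _ = (X ∩ B).card + (Y ∩ B).card + r := by rw [hc]

lemma lower_both :
    ∀ L : ℕ, ∀ (A B : KV k r) (W : (kneserGraph (2*k+r) k).Walk A B), W.length = L →
      (∀ m, L = 2*m → k ≤ (A.1 ∩ B.1).card + m*r) ∧
      (∀ m, L = 2*m+1 → (A.1 ∩ B.1).card ≤ m*r) := by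
  intro L
  induction L with
  | zero =>
    intro A B W hW
    have hAB : A = B := W.eq_of_length_eq_zero hW
    subst hAB
    refine ⟨fun m hm => ?_, fun m hm => by omega⟩
    simp only [Finset.inter_self, A.2]
    exact Nat.le_add_right _ _
  | succ L ih =>
    intro A B W hW
    cases W with
    | nil => simp at hW
    | cons h W' =>
      rename_i Y
      simp only [SimpleGraph.Walk.length_cons, Nat.succ_inj] at hW
      have IH := ih Y B W' hW
      constructor
      · intro m hm
        -- L+1 = 2m, so L = 2(m-1)+1, m ≥ 1
        obtain ⟨m', rfl⟩ : ∃ m', m = m' + 1 := by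
          rcases m with _ | m'
          · omega
          · exact ⟨m', rfl⟩
        have hL : L = 2*m' + 1 := by omega
        have h2 := IH.2 m' hL
        have h3 := pair_ge A.2 Y.2 B.2 h.2
        have : (m' + 1) * r = m' * r + r := by ring
        omega
      · intro m hm
        have hL : L = 2*m := by omega
        have h2 := IH.1 m hL
        have h3 := pair_le (X := A.1) (Y := Y.1) B.2 h.2
        omega

lemma eq_of_inter_card {A B : KV k r} (h : k ≤ (A.1 ∩ B.1).card) : A = B := by
  have h1 : A.1 ∩ B.1 = A.1 :=
    Finset.eq_of_subset_of_card_le inf_le_left (by rw [A.2]; exact h)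
  have h2 : A.1 ∩ B.1 = B.1 :=
    Finset.eq_of_subset_of_card_le inf_le_right (by rw [B.2]; exact h)
  exact Subtype.ext (h1 ▸ h2)

lemma kadj (hk : 1 ≤ k) {A B : KV k r} (h : Disjoint A.1 B.1) :
    (kneserGraph (2*k+r) k).Adj A B := by
  refine ⟨fun hAB => ?_, h⟩
  subst hAB
  have h0 : A.1 = ∅ := by simpa using disjoint_self.mp h
  have h1 := A.2
  rw [h0] at h1
  simp at h1
  omega

lemma upper_even (hk : 1 ≤ k) (hr : 1 ≤ r) :
    ∀ m : ℕ, ∀ (A B : KV k r), k ≤ (A.1 ∩ B.1).card + m*r →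
      ∃ W : (kneserGraph (2*k+r) k).Walk A B, W.length ≤ 2*m := by
  intro m
  induction m with
  | zero =>
    intro A B hAB
    have : A = B := eq_of_inter_card (by simpa using hAB)
    subst this
    exact ⟨SimpleGraph.Walk.nil, by simp⟩
  | succ m ih =>
    intro A B hAB
    by_cases hAB' : k ≤ (A.1 ∩ B.1).card
    · have : A = B := eq_of_inter_card hAB'
      subst this
      exact ⟨SimpleGraph.Walk.nil, by simp⟩
    push_neg at hAB'
    set X := A.1 with hXdef
    set Bs := B.1 with hBdef
    set t := (X ∩ Bs).card with htdef
    set d := min r (k - t) with hddef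
    have hcard : Fintype.card (Fin (2*k+r)) = 2*k+r := Fintype.card_fin _
    -- D ⊆ Bs \ X with card d
    have hBsX : (Bs \ X).card = k - t := by
      have := Finset.card_inter_add_card_sdiff Bs X
      rw [Finset.inter_comm] at this
      rw [B.2] at this
      omega
    obtain ⟨D, hDsub, hDcard⟩ := Finset.exists_subset_card_eq (s := Bs \ X) (n := d) (by omega)
    -- C ⊆ (X ∪ D)ᶜ with card k
    have hXD : (X ∪ D).card ≤ k + d := by
      calc (X ∪ D).card ≤ X.card + D.card := Finset.card_union_le _ _
        _ = k + d := by rw [A.2, hDcard]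
    have hXDc : k ≤ ((X ∪ D)ᶜ : Finset (Fin (2*k+r))).card := by
      rw [Finset.card_compl, hcard]
      omega
    obtain ⟨C, hCsub, hCcard⟩ := Finset.exists_subset_card_eq (s := (X ∪ D)ᶜ) (n := k) hXDc
    have hCX : Disjoint C X := by
      rw [Finset.disjoint_left]
      intro a ha hx
      have := hCsub ha
      simp [Finset.mem_compl] at this
      exact this.1 hx
    have hCD : Disjoint C D := by
      rw [Finset.disjoint_left]
      intro a ha hx
      have := hCsub ha
      simp [Finset.mem_compl] at this
      exact this.2 hx
    -- X' with (X ∩ Bs) ∪ D ⊆ X' ⊆ Cᶜ, card k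
    have hsub1 : (X ∩ Bs) ∪ D ⊆ (Cᶜ : Finset (Fin (2*k+r))) := by
      apply Finset.union_subset
      · intro a ha
        simp only [Finset.mem_compl]
        intro hc
        exact (Finset.disjoint_left.mp hCX hc) (Finset.mem_inter.mp ha).1
      · intro a ha
        simp only [Finset.mem_compl]
        intro hc
        exact (Finset.disjoint_left.mp hCD hc) ha
    have hdisjID : Disjoint (X ∩ Bs) D := by
      rw [Finset.disjoint_left]
      intro a ha hd2
      exact (Finset.mem_sdiff.mp (hDsub hd2)).2 (Finset.mem_inter.mp ha).1
    have hcard1 : ((X ∩ Bs) ∪ D).card = t + d := by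
      rw [Finset.card_union_of_disjoint hdisjID, hDcard]
    obtain ⟨X', hX'sub1, hX'sub2, hX'card⟩ :=
      Finset.exists_subsuperset_card_eq (n := k) hsub1 (by rw [hcard1]; omega)
        (by rw [Finset.card_compl, hcard, hCcard]; omega)
    have hCX' : Disjoint C X' := by
      rw [Finset.disjoint_right]
      intro a ha
      exact fun hc => (Finset.mem_compl.mp (hX'sub2 ha)) hc
    set Cv : KV k r := ⟨C, hCcard⟩ with hCv
    set A' : KV k r := ⟨X', hX'card⟩ with hA'
    have hadj1 : (kneserGraph (2*k+r) k).Adj A Cv := kadj hk hCX.symm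
    have hadj2 : (kneserGraph (2*k+r) k).Adj Cv A' := kadj hk hCX'
    have hX'B : t + d ≤ (X' ∩ Bs).card := by
      rw [← hcard1]
      apply Finset.card_le_card
      apply Finset.subset_inter hX'sub1
      apply Finset.union_subset (Finset.inter_subset_right)
      intro a ha
      exact (Finset.mem_sdiff.mp (hDsub ha)).1
    have hIH : k ≤ (A'.1 ∩ Bs).card + m*r := by
      have hbr : (A'.1 ∩ Bs).card = (X' ∩ Bs).card := rfl
      have hmsucc : (m+1)*r = m*r + r := by ring
      rcases Nat.le_total r (k - t) with hc | hc
      · have : d = r := by omega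
        omega
      · have : d = k - t := by omega
        omega
    obtain ⟨W', hW'⟩ := ih A' B hIH
    refine ⟨SimpleGraph.Walk.cons hadj1 (SimpleGraph.Walk.cons hadj2 W'), ?_⟩
    simp only [SimpleGraph.Walk.length_cons]
    omega

lemma upper_odd (hk : 1 ≤ k) (hr : 1 ≤ r) :
    ∀ m : ℕ, ∀ (A B : KV k r), (A.1 ∩ B.1).card ≤ m*r →
      ∃ W : (kneserGraph (2*k+r) k).Walk A B, W.length ≤ 2*m+1 := by
  intro m A B hAB
  have hcard : Fintype.card (Fin (2*k+r)) = 2*k+r := Fintype.card_fin _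
  have ht : (A.1 ∩ B.1).card ≤ k := by
    calc (A.1 ∩ B.1).card ≤ A.1.card := Finset.card_le_card inf_le_left
      _ = k := A.2
  have hXBs : (A.1 \ B.1).card = k - (A.1 ∩ B.1).card := by
    have := Finset.card_inter_add_card_sdiff A.1 B.1
    rw [A.2] at this
    omega
  have hsub1 : A.1 \ B.1 ⊆ (B.1ᶜ : Finset (Fin (2*k+r))) := by
    intro a ha
    exact Finset.mem_compl.mpr (Finset.mem_sdiff.mp ha).2
  obtain ⟨C, hCsub1, hCsub2, hCcard⟩ :=
    Finset.exists_subsuperset_card_eq (n := k) hsub1 (by omega)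
      (by rw [Finset.card_compl, hcard, B.2]; omega)
  have hCBs : Disjoint C B.1 := by
    rw [Finset.disjoint_left]
    intro a ha
    exact Finset.mem_compl.mp (hCsub2 ha)
  have hXC : k - (A.1 ∩ B.1).card ≤ (A.1 ∩ C).card := by
    rw [← hXBs]
    exact Finset.card_le_card (Finset.subset_inter Finset.sdiff_subset hCsub1)
  obtain ⟨W, hW⟩ := upper_even hk hr m A ⟨C, hCcard⟩ (by
    have hbr : ((⟨C, hCcard⟩ : KV k r).1 : Finset (Fin (2*k+r))) = C := rfl
    rw [hbr]
    omega)
  refine ⟨W.concat (kadj hk hCBs), ?_⟩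
  rw [SimpleGraph.Walk.length_concat]
  omega

lemma exists_pair (hk : 1 ≤ k) (s : ℕ) (hs : s ≤ k) :
    ∃ A B : KV k r, (A.1 ∩ B.1).card = s := by
  have hcard : Fintype.card (Fin (2*k+r)) = 2*k+r := Fintype.card_fin _
  obtain ⟨A0, _, hA0card⟩ := Finset.exists_subset_card_eq (s := (Finset.univ : Finset (Fin (2*k+r)))) (n := k)
    (by rw [Finset.card_univ, hcard]; omega)
  obtain ⟨I, hIsub, hIcard⟩ := Finset.exists_subset_card_eq (s := A0) (n := s) (by omega)
  obtain ⟨J, hJsub, hJcard⟩ := Finset.exists_subset_card_eq (s := A0ᶜ) (n := k - s)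
    (by rw [Finset.card_compl, hcard, hA0card]; omega)
  have hIJ : Disjoint I J := by
    rw [Finset.disjoint_left]
    intro a ha hj
    exact Finset.mem_compl.mp (hJsub hj) (hIsub ha)
  have hBcard : (I ∪ J).card = k := by
    rw [Finset.card_union_of_disjoint hIJ, hIcard, hJcard]
    omega
  refine ⟨⟨A0, hA0card⟩, ⟨I ∪ J, hBcard⟩, ?_⟩
  have : A0 ∩ (I ∪ J) = I := by
    apply Finset.Subset.antisymm
    · intro a ha
      obtain ⟨h1, h2⟩ := Finset.mem_inter.mp ha
      rcases Finset.mem_union.mp h2 with h | h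
      · exact h
      · exact absurd h1 (Finset.mem_compl.mp (hJsub h))
    · exact Finset.subset_inter hIsub Finset.subset_union_left
  simp only [this, hIcard]
end aux

theorem stmt8 (k r p : ℕ) (hk : 2 ≤ k) (hr : 1 ≤ r) (hrk : r < k - 1) (hp : 1 ≤ p)
    (hnd : ¬ r ∣ (k - 1)) (hdiam : (kneserGraph (2 * k + r) k).diam = 2 * p + 1)
    (A B : {A : Finset (Fin (2 * k + r)) // A.card = k}) :
    (kneserGraph (2 * k + r) k).dist A B = 2 * p + 1 ↔
      r * p - r + 1 ≤ (A.1 ∩ B.1).card ∧ (A.1 ∩ B.1).card ≤ k - r * p - 1 := by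
  have hk1 : 1 ≤ k := by omega
  have hreach : ∀ A B : KV k r, (kneserGraph (2*k+r) k).Reachable A B := by
    intro A B
    obtain ⟨W, _⟩ := upper_even hk1 hr k A B (by
      have : k ≤ k * r := Nat.le_mul_of_pos_right k hr
      omega)
    exact ⟨W⟩
  have hediam : (kneserGraph (2*k+r) k).ediam ≠ ⊤ :=
    SimpleGraph.ediam_ne_top_of_diam_ne_zero (by rw [hdiam]; omega)
  have hk2 : k ≤ 2*(r*p) + 1 := by
    by_contra hcon
    push_neg at hcon
    obtain ⟨A0, B0, hAB0⟩ := exists_pair (r := r) hk1 (r*p+1) (by omega)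
    obtain ⟨W, hWlen⟩ := (hreach A0 B0).exists_walk_length_eq_dist
    have hdle : (kneserGraph (2*k+r) k).dist A0 B0 ≤ (kneserGraph (2*k+r) k).diam :=
      SimpleGraph.dist_le_diam hediam
    rw [hdiam] at hdle
    have hlow := lower_both W.length A0 B0 W rfl
    rcases Nat.even_or_odd W.length with ⟨m, hm⟩ | ⟨m, hm⟩
    · have h1 := hlow.1 m (by omega)
      have hmp : m ≤ p := by omega
      have h2 : m * r ≤ p * r := Nat.mul_le_mul_right r hmp
      have hpr : p * r = r * p := Nat.mul_comm p r
      omega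
    · have h1 := hlow.2 m (by omega)
      have hmp : m ≤ p := by omega
      have h2 : m * r ≤ p * r := Nat.mul_le_mul_right r hmp
      have hpr : p * r = r * p := Nat.mul_comm p r
      omega
  obtain ⟨q, rfl⟩ : ∃ q, p = q + 1 := ⟨p - 1, by omega⟩
  have e1 : r*(q+1) = r*q + r := by ring
  have e2 : (q+1)*r = r*q + r := by ring
  have e3 : q*r = r*q := Nat.mul_comm q r
  constructor
  · intro h
    have c1 : ¬ k ≤ (A.1 ∩ B.1).card + (q+1)*r := by
      intro hc
      obtain ⟨W, hW⟩ := upper_even hk1 hr (q+1) A B hc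
      have := SimpleGraph.dist_le W
      omega
    have c2 : ¬ (A.1 ∩ B.1).card ≤ q*r := by
      intro hc
      obtain ⟨W, hW⟩ := upper_odd hk1 hr q A B hc
      have := SimpleGraph.dist_le W
      omega
    omega
  · rintro ⟨h1, h2⟩
    have hs1 : r*q + 1 ≤ (A.1 ∩ B.1).card := by omega
    have hs2 : (A.1 ∩ B.1).card + (r*q + r) + 1 ≤ k := by omega
    have hs3 : (A.1 ∩ B.1).card ≤ (q+1)*r := by omega
    obtain ⟨W, hW⟩ := upper_odd hk1 hr (q+1) A B hs3
    have hdle := SimpleGraph.dist_le W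
    obtain ⟨W', hW'len⟩ := (hreach A B).exists_walk_length_eq_dist
    have hlow := lower_both W'.length A B W' rfl
    rcases Nat.even_or_odd W'.length with ⟨m, hm⟩ | ⟨m, hm⟩
    · have hh := hlow.1 m (by omega)
      have hmp : m ≤ q + 1 := by omega
      have hmr : m * r ≤ (q+1) * r := Nat.mul_le_mul_right r hmp
      omega
    · have hh := hlow.2 m (by omega)
      rcases Nat.lt_or_ge m (q+1) with hm2 | hm2
      · have : m*r ≤ q*r := Nat.mul_le_mul_right r (by omega)
        omega
      · omega
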